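/- Let 0 < r < 1, let a be a point of the sphere of radius r centered at the origin in ℝ^M, and let A be a subset of that sphere such that |x − a| ≤ γ for all x ∈ A, where 0 < γ < r. Then the convex hull of A does not meet the closed ball of radius ρ = r − γ²/r centered at the origin. -/

import Mathlib

/-- **Proposition 7.1.** Let `0 < r < 1`, let `a` be a point of the sphere of
radius `r` centered at the origin of `ℝ^M`, and let `A` be a subset of that sphere with
`‖x - a‖ ≤ γ` for all `x ∈ A`, where `0 < γ < r`. Then the convex hull of `A` does not meet the
closed ball of radius `ρ = r - γ²/r` centered at the origin. -/
theorem stmt5 (M : ℕ) (r γ : ℝ) (hr0 : 0 < r) (hr1 : r < 1) (hγ0 : 0 < γ) (hγr : γ < r)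
    (a : EuclideanSpace ℝ (Fin M)) (ha : a ∈ Metric.sphere (0 : EuclideanSpace ℝ (Fin M)) r)
    (A : Set (EuclideanSpace ℝ (Fin M)))
    (hA : A ⊆ Metric.sphere (0 : EuclideanSpace ℝ (Fin M)) r)
    (hAa : ∀ x ∈ A, dist x a ≤ γ) :
    convexHull ℝ A ∩ Metric.closedBall (0 : EuclideanSpace ℝ (Fin M)) (r - γ ^ 2 / r) = ∅ := by
  have hna : ‖a‖ = r := by simpa using ha
  -- the half-space {y | r² - γ²/2 ≤ ⟪a, y⟫} is convex and contains A
  have hhull : ∀ y ∈ convexHull ℝ A,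
      r ^ 2 - γ ^ 2 / 2 ≤ inner ℝ a y := by
    intro y hy
    have hconv : Convex ℝ {y : EuclideanSpace ℝ (Fin M) |
        r ^ 2 - γ ^ 2 / 2 ≤ inner ℝ a y} :=
      convex_halfSpace_ge (innerSL ℝ a).isLinear _
    have hsub : A ⊆ {y : EuclideanSpace ℝ (Fin M) |
        r ^ 2 - γ ^ 2 / 2 ≤ inner ℝ a y} := by
      intro x hx
      have hnx : ‖x‖ = r := by simpa using hA hx
      have hd : ‖x - a‖ ≤ γ := by simpa [dist_eq_norm] using hAa x hx
      have hsq : ‖x - a‖ ^ 2 ≤ γ ^ 2 := by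
        have := sq_le_sq' (by linarith [norm_nonneg (x - a)]) hd
        simpa using this
      have hexp : ‖x - a‖ ^ 2 = ‖x‖ ^ 2 - 2 * inner ℝ x a + ‖a‖ ^ 2 :=
        norm_sub_sq_real x a
      have : (inner ℝ a x : ℝ) = inner ℝ x a := real_inner_comm x a
      simp only [Set.mem_setOf_eq, this]
      nlinarith [hsq, hexp]
    exact convexHull_min hsub hconv hy
  ext y
  simp only [Set.mem_inter_iff, Metric.mem_closedBall, Set.mem_empty_iff_false, iff_false,
    not_and]
  intro hy hball
  have h1 : r ^ 2 - γ ^ 2 / 2 ≤ inner ℝ a y := hhull y hy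
  have h2 : (inner ℝ a y : ℝ) ≤ ‖a‖ * ‖y‖ := real_inner_le_norm a y
  have hny : ‖y‖ ≤ r - γ ^ 2 / r := by simpa [dist_eq_norm] using hball
  have hρ : r - γ ^ 2 / r < r := by
    have : 0 < γ ^ 2 / r := by positivity
    linarith
  rw [hna] at h2
  have h3 : r * (r - γ ^ 2 / r) = r ^ 2 - γ ^ 2 := by field_simp
  nlinarith [sq_nonneg γ, mul_le_mul_of_nonneg_left hny (le_of_lt hr0)]
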